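/- Let M_σ : ℤ^9 → ℤ^9 be as above and v = (1, 0, 0, 0, 0, -1, -1, -1, -1). Then the first coordinate (the degree d) of M_σⁿ(v) is unbounded as n → ∞; i.e. for every N there exists n with (M_σⁿ v)₁ > N. -/
import Mathlib
set_option maxRecDepth 20000


open Matrix

/-- The Cremona action on `(d, m₁, …, m₈)` centered at the first four points,
as a 9×9 integer matrix in the basis `(H, E₁, …, E₈)`. -/
def Cremona : Matrix (Fin 9) (Fin 9) ℤ :=
  !![3,-1,-1,-1,-1,0,0,0,0;
     2, 0,-1,-1,-1,0,0,0,0;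
     2,-1, 0,-1,-1,0,0,0,0;
     2,-1,-1, 0,-1,0,0,0,0;
     2,-1,-1,-1, 0,0,0,0,0;
     0, 0, 0, 0, 0,1,0,0,0;
     0, 0, 0, 0, 0,0,1,0,0;
     0, 0, 0, 0, 0,0,0,1,0;
     0, 0, 0, 0, 0,0,0,0,1]

/-- The permutation `(d, m₁, …, m₈) ↦ (d, m₂, …, m₈, m₁)`. -/
def CyclicShift : Matrix (Fin 9) (Fin 9) ℤ :=
  !![1,0,0,0,0,0,0,0,0;
     0,0,1,0,0,0,0,0,0;
     0,0,0,1,0,0,0,0,0;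
     0,0,0,0,1,0,0,0,0;
     0,0,0,0,0,1,0,0,0;
     0,0,0,0,0,0,1,0,0;
     0,0,0,0,0,0,0,1,0;
     0,0,0,0,0,0,0,0,1;
     0,1,0,0,0,0,0,0,0]

/-- The Coxeter element `M_σ = P ∘ M`. -/
def Msigma : Matrix (Fin 9) (Fin 9) ℤ := CyclicShift * Cremona

/-- The class `H - E₅ - E₆ - E₇ - E₈`. -/
def rootClass : Fin 9 → ℤ := ![1, 0, 0, 0, 0, -1, -1, -1, -1]


/-- 216 times the anticanonical class; fixed by `Msigma`. -/
def Kaux : Fin 9 → ℤ := ![432,216,216,216,216,216,216,216,216]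

lemma hMK : Msigma.mulVec Kaux = Kaux := by decide

lemma hMnK : ∀ n : ℕ, (Msigma ^ n).mulVec Kaux = Kaux := by
  intro n
  induction n with
  | zero => simp
  | succ n ih =>
      rw [pow_succ', ← Matrix.mulVec_mulVec, ih, hMK]

lemma h18 : (Msigma ^ 18).mulVec rootClass = ![211,117,105,93,81,92,104,116,128] := by
  decide

lemma h36 : (Msigma ^ 36).mulVec rootClass
    = (2 : ℤ) • ((Msigma ^ 18).mulVec rootClass) - rootClass + Kaux := by
  decide

lemma key (n : ℕ) : (Msigma ^ (n+36)).mulVec rootClass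
    = (2 : ℤ) • ((Msigma ^ (n+18)).mulVec rootClass)
      - (Msigma ^ n).mulVec rootClass + Kaux := by
  have h1 : (Msigma ^ (n+36)).mulVec rootClass
      = (Msigma ^ n).mulVec ((Msigma ^ 36).mulVec rootClass) := by
    rw [Matrix.mulVec_mulVec, ← pow_add]
  rw [h1, h36, Matrix.mulVec_add, Matrix.mulVec_sub, Matrix.mulVec_smul, hMnK,
    Matrix.mulVec_mulVec, ← pow_add]

def aseq (k : ℕ) : ℤ := ((Msigma ^ (18*k)).mulVec rootClass) 0

lemma arec (k : ℕ) : aseq (k+2) = 2 * aseq (k+1) - aseq k + 432 := by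
  have h : 18*(k+2) = 18*k + 36 := by ring
  have h' : 18*(k+1) = 18*k + 18 := by ring
  have := congrFun (key (18*k)) 0
  simp only [aseq, h, h']
  simp only [Pi.add_apply, Pi.sub_apply, Pi.smul_apply, smul_eq_mul] at this
  rw [this]
  norm_num [Kaux]

lemma a0 : aseq 0 = 1 := by decide

lemma a1 : aseq 1 = 211 := by
  have := congrFun h18 0
  simp only [aseq]
  norm_num
  rw [this]; decide

lemma step : ∀ k : ℕ, aseq (k+1) ≥ aseq k + 210 := by
  intro k
  induction k with
  | zero => rw [a0, a1]; norm_num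
  | succ k ih => rw [arec]; linarith

lemma growth : ∀ k : ℕ, aseq k ≥ 1 + 210 * k := by
  intro k
  induction k with
  | zero => rw [a0]; norm_num
  | succ k ih =>
      have := step k
      push_cast
      push_cast at ih
      linarith

/-- the degree (first coordinate) of `M_σⁿ(v)` is unbounded in `n`. -/
theorem msigma_orbit_degree_unbounded :
    ∀ N : ℤ, ∃ n : ℕ, ((Msigma ^ n).mulVec rootClass) 0 > N := by
  intro N
  refine ⟨18 * (N.toNat + 1), ?_⟩
  have h := growth (N.toNat + 1)
  have h2 : N ≤ (N.toNat : ℤ) := Int.self_le_toNat N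
  have : aseq (N.toNat + 1) > N := by push_cast at h ⊢; linarith
  exact this
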